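/- For 0 < q < 1, θ₃(q)^2 = 1 + 4 ∑_{n=1}^∞ q^n / (1 + q^{2n}). -/
import Mathlib

open Finset

/-- The character mod 4. -/
def chi4 (d : ℕ) : ℤ := if d % 4 = 1 then 1 else if d % 4 = 3 then -1 else 0

/-- Sum of chi4 over divisors. -/
def cfun (N : ℕ) : ℤ := ∑ d ∈ N.divisors, chi4 d

lemma chi4_mul (m n : ℕ) : chi4 (m * n) = chi4 m * chi4 n := by
  have h4 : (0:ℕ) < 4 := by norm_num
  have hm := Nat.mod_lt m h4
  have hn := Nat.mod_lt n h4
  have key : ∀ a b : Fin 4,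
      (if a.val * b.val % 4 = 1 then (1:ℤ) else if a.val * b.val % 4 = 3 then -1 else 0) =
      (if a.val = 1 then (1:ℤ) else if a.val = 3 then -1 else 0) *
      (if b.val = 1 then (1:ℤ) else if b.val = 3 then -1 else 0) := by decide
  have : chi4 (m * n) = (if m % 4 * (n % 4) % 4 = 1 then (1:ℤ)
      else if m % 4 * (n % 4) % 4 = 3 then -1 else 0) := by
    rw [chi4, Nat.mul_mod]
  rw [this, key ⟨m % 4, hm⟩ ⟨n % 4, hn⟩, chi4, chi4]

lemma chi4_pow (p k : ℕ) : chi4 (p ^ k) = chi4 p ^ k := by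
  induction k with
  | zero => simp [chi4]
  | succ k ih => rw [pow_succ, pow_succ, chi4_mul, ih]

/-- chi4 as arithmetic function -/
def chiA : ArithmeticFunction ℤ := ⟨chi4, by simp [chi4]⟩

lemma chiA_mult : chiA.IsMultiplicative :=
  ⟨by simp [chiA, chi4], fun _ => by simpa [chiA] using chi4_mul _ _⟩

lemma cfun_eq (N : ℕ) : cfun N = ((ArithmeticFunction.zeta : ArithmeticFunction ℕ) * chiA) N := by
  rw [ArithmeticFunction.coe_zeta_mul_apply]; rfl

lemma cfun_mult : Function.Injective (id : ℕ → ℕ) := fun a b h => h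

lemma cfun_mul_coprime {m n : ℕ} (h : Nat.Coprime m n) : cfun (m * n) = cfun m * cfun n := by
  rw [cfun_eq, cfun_eq, cfun_eq]
  exact (ArithmeticFunction.isMultiplicative_zeta.natCast.mul chiA_mult).map_mul_of_coprime h

lemma cfun_prime_pow {p : ℕ} (hp : p.Prime) (e : ℕ) :
    cfun (p ^ e) = ∑ i ∈ range (e + 1), chi4 p ^ i := by
  rw [cfun, Nat.sum_divisors_prime_pow hp]
  exact Finset.sum_congr rfl fun i _ => chi4_pow p i

lemma cfun_one : cfun 1 = 1 := by simp [cfun, chi4]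

open Finset GaussianInt

local notation "ℤi" => GaussianInt

/-- solutions set -/
def Sset (n : ℤ) : Set ℤi := {z : ℤi | Zsqrtd.norm z = n}

noncomputable def Rfun (N : ℕ) : ℕ := (Sset (N : ℤ)).ncard

lemma norm_eq_sq_add_sq (z : ℤi) : Zsqrtd.norm z = z.re * z.re + z.im * z.im := by
  rw [Zsqrtd.norm_def]; ring

lemma Sset_finite (N : ℕ) : (Sset (N : ℤ)).Finite := by
  have hsub : Sset (N : ℤ) ⊆ (fun p : ℤ × ℤ => (⟨p.1, p.2⟩ : ℤi)) ''
      (Set.Icc (-(N:ℤ)) N ×ˢ Set.Icc (-(N:ℤ)) N) := by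
    intro z hz
    have hz' : z.re * z.re + z.im * z.im = (N:ℤ) := by rw [← norm_eq_sq_add_sq]; exact hz
    have h1 : z.re * z.re ≤ (N:ℤ) * N := by nlinarith [mul_self_nonneg z.im, Int.natCast_nonneg N]
    have h2 : z.im * z.im ≤ (N:ℤ) * N := by nlinarith [mul_self_nonneg z.re, Int.natCast_nonneg N]
    have hb1 : -(N:ℤ) ≤ z.re ∧ z.re ≤ N := by
      constructor <;> nlinarith [Int.natCast_nonneg N]
    have hb2 : -(N:ℤ) ≤ z.im ∧ z.im ≤ N := by
      constructor <;> nlinarith [Int.natCast_nonneg N]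
    exact ⟨(z.re, z.im), ⟨⟨hb1.1, hb1.2⟩, ⟨hb2.1, hb2.2⟩⟩, by ext <;> simp⟩
  exact ((Set.finite_Icc _ _).prod (Set.finite_Icc _ _)).image _ |>.subset hsub

lemma star_mk (a b : ℤ) : star (⟨a, b⟩ : ℤi) = ⟨a, -b⟩ := rfl

lemma prime_of_norm_prime {π : ℤi} (h : Prime (Zsqrtd.norm π)) : Prime π := by
  rw [← UniqueFactorizationMonoid.irreducible_iff_prime]
  constructor
  · intro hu
    rw [← Zsqrtd.norm_eq_one_iff' (by norm_num) π] at hu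
    rw [hu] at h
    exact h.not_unit isUnit_one
  · intro a b hab
    have hn : Zsqrtd.norm π = Zsqrtd.norm a * Zsqrtd.norm b := by rw [hab, Zsqrtd.norm_mul]
    rcases h.irreducible.isUnit_or_isUnit hn with h' | h'
    · left
      rw [← Zsqrtd.norm_eq_one_iff' (by norm_num) a]
      rcases Int.isUnit_iff.1 h' with h'' | h''
      · exact h''
      · exfalso; have := GaussianInt.norm_nonneg a; omega
    · right
      rw [← Zsqrtd.norm_eq_one_iff' (by norm_num) b]
      rcases Int.isUnit_iff.1 h' with h'' | h''
      · exact h''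
      · exfalso; have := GaussianInt.norm_nonneg b; omega

lemma star_dvd_star_of_dvd {a z : ℤi} (h : a ∣ z) : star a ∣ star z := by
  obtain ⟨c, rfl⟩ := h
  exact ⟨star c, by rw [star_mul, mul_comm]⟩

lemma norm_one_cases {u : ℤi} (h : Zsqrtd.norm u = 1) :
    u = ⟨1,0⟩ ∨ u = ⟨-1,0⟩ ∨ u = ⟨0,1⟩ ∨ u = ⟨0,-1⟩ := by
  obtain ⟨a, b⟩ := u
  have h1 : a * a + b * b = 1 := by simpa [norm_eq_sq_add_sq] using h
  have ha1 : -1 ≤ a := by nlinarith [mul_self_nonneg b]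
  have ha2 : a ≤ 1 := by nlinarith [mul_self_nonneg b]
  have hb1 : -1 ≤ b := by nlinarith [mul_self_nonneg a]
  have hb2 : b ≤ 1 := by nlinarith [mul_self_nonneg a]
  have ha : a = -1 ∨ a = 0 ∨ a = 1 := by omega
  have hb : b = -1 ∨ b = 0 ∨ b = 1 := by omega
  rcases ha with rfl | rfl | rfl <;> rcases hb with rfl | rfl | rfl <;>
    simp_all [Zsqrtd.ext_iff] <;> omega

/-- The central bijection: multiplication by π. -/
lemma ncard_dvd_norm (π : ℤi) (hπ : π ≠ 0) (K : ℤ) :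
    {z : ℤi | Zsqrtd.norm z = Zsqrtd.norm π * K ∧ π ∣ z}.ncard = (Sset K).ncard := by
  have hnπ : Zsqrtd.norm π ≠ 0 := fun h => hπ (GaussianInt.norm_eq_zero.1 h)
  have himg : {z : ℤi | Zsqrtd.norm z = Zsqrtd.norm π * K ∧ π ∣ z} = (fun w => π * w) '' Sset K := by
    ext z
    constructor
    · rintro ⟨hn, w, rfl⟩
      refine ⟨w, ?_, rfl⟩
      have : Zsqrtd.norm π * Zsqrtd.norm w = Zsqrtd.norm π * K := by
        rw [← Zsqrtd.norm_mul]; exact hn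
      exact mul_left_cancel₀ hnπ this
    · rintro ⟨w, hw, rfl⟩
      exact ⟨by rw [Zsqrtd.norm_mul, hw], Dvd.intro _ rfl⟩
  rw [himg, Set.ncard_image_of_injective _ (mul_right_injective₀ hπ)]

lemma dvd_of_star_dvd {a z : ℤi} (h : a ∣ star z) : star a ∣ z := by
  have := star_dvd_star_of_dvd h; rwa [star_star] at this

lemma Rfun_one : Rfun 1 = 4 := by
  have h : Sset ((1:ℕ):ℤ) = ↑({⟨1,0⟩, ⟨-1,0⟩, ⟨0,1⟩, ⟨0,-1⟩} : Finset ℤi) := by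
    ext z
    simp only [Finset.coe_insert, Set.mem_insert_iff, Finset.coe_singleton,
      Set.mem_singleton_iff, Sset, Set.mem_setOf_eq]
    constructor
    · intro hz
      exact norm_one_cases (by simpa using hz)
    · rintro (rfl | rfl | rfl | rfl) <;> simp [norm_eq_sq_add_sq]
  rw [Rfun, h, Set.ncard_coe_finset]
  decide

def pitwo : ℤi := ⟨1, 1⟩

lemma pitwo_norm : Zsqrtd.norm pitwo = 2 := by simp [norm_eq_sq_add_sq, pitwo]

lemma pitwo_prime : Prime pitwo := by
  apply prime_of_norm_prime; rw [pitwo_norm]; exact Int.prime_two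

lemma star_pitwo_eq : star pitwo = pitwo * ⟨0, -1⟩ := by decide

lemma norm_cast_eq_mul_conj (z : ℤi) : ((Zsqrtd.norm z : ℤ) : ℤi) = z * star z :=
  Zsqrtd.norm_eq_mul_conj z

lemma pitwo_dvd {z : ℤi} {M : ℕ} (h : Zsqrtd.norm z = ((2 * M : ℕ) : ℤ)) : pitwo ∣ z := by
  have h2 : pitwo ∣ ((Zsqrtd.norm z : ℤ) : ℤi) := by
    rw [h]
    push_cast
    have : ((2:ℤ) : ℤi) = pitwo * star pitwo := by
      have := norm_cast_eq_mul_conj pitwo; rw [pitwo_norm] at this; exact this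
    exact Dvd.dvd.mul_right ⟨star pitwo, by push_cast at this ⊢; exact this⟩ _
  rw [norm_cast_eq_mul_conj] at h2
  rcases pitwo_prime.2.2 _ _ h2 with h3 | h3
  · exact h3
  · have h4 := dvd_of_star_dvd h3
    rw [star_pitwo_eq] at h4
    exact dvd_trans (Dvd.intro _ rfl) h4

lemma Rfun_two_mul (M : ℕ) : Rfun (2 * M) = Rfun M := by
  have h1 : Sset ((2*M : ℕ) : ℤ) =
      {z : ℤi | Zsqrtd.norm z = Zsqrtd.norm pitwo * (M:ℤ) ∧ pitwo ∣ z} := by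
    ext z
    simp only [Sset, Set.mem_setOf_eq, pitwo_norm]
    constructor
    · intro hz
      refine ⟨by rw [hz]; push_cast; ring, pitwo_dvd hz⟩
    · rintro ⟨hn, -⟩
      rw [hn]; push_cast; ring
  rw [Rfun, h1, ncard_dvd_norm pitwo (by decide) (M : ℤ)]; rfl

lemma p3_dvd {p : ℕ} (hp : p.Prime) (h3 : p % 4 = 3) {z : ℤi}
    (h : (p:ℤ) ∣ Zsqrtd.norm z) : ((p:ℕ) : ℤi) ∣ z := by
  haveI := Fact.mk hp
  have hprime : Prime ((p:ℕ) : ℤi) := (prime_iff_mod_four_eq_three_of_nat_prime p).2 h3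
  have h2 : ((p:ℕ):ℤi) ∣ z * star z := by
    rw [← norm_cast_eq_mul_conj]
    obtain ⟨c, hc⟩ := h
    exact ⟨((c:ℤ):ℤi), by rw [hc]; push_cast; ring⟩
  rcases hprime.2.2 _ _ h2 with h3' | h3'
  · exact h3'
  · have h4 := dvd_of_star_dvd h3'
    simpa using h4

lemma Sset_empty_p3 {p N : ℕ} (hp : p.Prime) (h3 : p % 4 = 3) (hpN : p ∣ N)
    (hp2N : ¬ p^2 ∣ N) : Sset ((N:ℕ):ℤ) = ∅ := by
  ext z
  simp only [Sset, Set.mem_setOf_eq, Set.mem_empty_iff_false, iff_false]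
  intro hz
  have hdvd : ((p:ℕ):ℤi) ∣ z := p3_dvd hp h3 (by rw [hz]; exact_mod_cast Int.natCast_dvd_natCast.2 hpN)
  obtain ⟨w, rfl⟩ := hdvd
  rw [Zsqrtd.norm_mul, Zsqrtd.norm_natCast] at hz
  apply hp2N
  have : ((p^2 : ℕ) : ℤ) ∣ (N : ℤ) := ⟨Zsqrtd.norm w, by rw [← hz]; push_cast; ring⟩
  exact_mod_cast this

lemma Rfun_p3 {p N : ℕ} (hp : p.Prime) (h3 : p % 4 = 3) (hp2N : p^2 ∣ N) :
    Rfun N = Rfun (N / p^2) := by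
  have hpos : (0:ℕ) < p := hp.pos
  have hN : N = p^2 * (N / p^2) := (Nat.mul_div_cancel' hp2N).symm
  have h1 : Sset ((N:ℕ):ℤ) =
      {z : ℤi | Zsqrtd.norm z = Zsqrtd.norm ((p:ℕ):ℤi) * ((N / p^2 : ℕ):ℤ) ∧ ((p:ℕ):ℤi) ∣ z} := by
    ext z
    simp only [Sset, Set.mem_setOf_eq, Zsqrtd.norm_natCast]
    constructor
    · intro hz
      constructor
      · rw [hz]; conv_lhs => rw [hN]
        push_cast; ring
      · exact p3_dvd hp h3 (by rw [hz]; exact_mod_cast Int.natCast_dvd_natCast.2 (dvd_trans (dvd_pow_self p two_ne_zero) hp2N))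
    · rintro ⟨hn, -⟩
      rw [hn]; conv_rhs => rw [hN]
      push_cast; ring
  have hpne : ((p:ℕ):ℤi) ≠ 0 := by
    simp only [ne_eq, Nat.cast_eq_zero]
    exact_mod_cast hp.ne_zero
  rw [Rfun, h1, ncard_dvd_norm _ hpne ((N / p^2 : ℕ):ℤ)]; rfl

lemma prime_not_mul_self {p a : ℕ} (hp : p.Prime) : a * a ≠ p := by
  intro h
  have ha : a ∣ p := ⟨a, h.symm⟩
  rcases (Nat.dvd_prime hp).1 ha with rfl | rfl
  · simp at h; exact hp.ne_one h.symm
  · have := hp.two_le; nlinarith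

section P1

variable {p K : ℕ} (hp : p.Prime) (h1 : p % 4 = 1)

lemma exists_pi (hp : p.Prime) (h1 : p % 4 = 1) :
    ∃ π : ℤi, Zsqrtd.norm π = (p:ℤ) ∧ Prime π ∧ ¬ star π ∣ π := by
  haveI := Fact.mk hp
  obtain ⟨a, b, hab⟩ := Nat.Prime.sq_add_sq (by omega : p % 4 ≠ 3)
  have hnorm : Zsqrtd.norm (⟨(a:ℤ), (b:ℤ)⟩ : ℤi) = (p:ℤ) := by
    rw [norm_eq_sq_add_sq]
    have : ((a^2 + b^2 : ℕ) : ℤ) = (p:ℤ) := by exact_mod_cast hab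
    push_cast at this ⊢
    nlinarith [this]
  refine ⟨⟨(a:ℤ), (b:ℤ)⟩, hnorm, ?_, ?_⟩
  · exact prime_of_norm_prime (by rw [hnorm]; exact_mod_cast Nat.prime_iff_prime_int.1 hp)
  · intro hdvd
    obtain ⟨c, hc⟩ := hdvd
    have hnc : Zsqrtd.norm c = 1 := by
      have h2 : (p:ℤ) = (p:ℤ) * Zsqrtd.norm c := by
        conv_lhs => rw [← hnorm, hc]
        rw [Zsqrtd.norm_mul, Zsqrtd.norm_conj, hnorm]
      have hpne : (p:ℤ) ≠ 0 := by exact_mod_cast hp.ne_zero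
      exact mul_left_cancel₀ hpne (h2.symm.trans (mul_one _).symm)
    have hstar : star (⟨(a:ℤ), (b:ℤ)⟩ : ℤi) = ⟨(a:ℤ), -(b:ℤ)⟩ := rfl
    rcases norm_one_cases hnc with rfl | rfl | rfl | rfl <;>
      rw [hstar] at hc <;>
      simp only [Zsqrtd.ext_iff, Zsqrtd.re_mul, Zsqrtd.im_mul] at hc <;>
      push_cast at hc
    · -- c = 1 : b = -b
      have hb : b = 0 := by omega
      subst hb
      simp at hab
      exact prime_not_mul_self hp (a := a) (by rw [← hab]; ring)
    · -- c = -1 : a = -a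
      have ha : a = 0 := by omega
      subst ha
      simp at hab
      exact prime_not_mul_self hp (a := b) (by rw [← hab]; ring)
    · -- c = i : a = b
      have hab2 : a = b := by omega
      subst hab2
      omega
    · -- c = -i : a = -b
      have h0 : a = 0 ∧ b = 0 := by omega
      obtain ⟨rfl, rfl⟩ := h0
      simp at hab
      exact hp.ne_zero hab.symm

lemma Rfun_p1 (hp : p.Prime) (h1 : p % 4 = 1) (K : ℕ) :
    Rfun (p * K) + (if p ∣ K then Rfun (K / p) else 0) = 2 * Rfun K := by
  obtain ⟨π, hnorm, hprime, hnassoc⟩ := exists_pi hp h1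
  have hπne : π ≠ 0 := hprime.ne_zero
  have hsnorm : Zsqrtd.norm (star π) = (p:ℤ) := by rw [Zsqrtd.norm_conj, hnorm]
  have hsne : star π ≠ 0 := fun h => hπne (by simpa using congrArg star h)
  have hsprime : Prime (star π) := prime_of_norm_prime (by
    rw [hsnorm]; exact_mod_cast Nat.prime_iff_prime_int.1 hp)
  have hppi : ((p:ℕ) : ℤi) = π * star π := by
    have := norm_cast_eq_mul_conj π
    rw [hnorm] at this
    exact_mod_cast this
  set A := {z : ℤi | Zsqrtd.norm z = Zsqrtd.norm π * (K:ℤ) ∧ π ∣ z} with hA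
  set B := {z : ℤi | Zsqrtd.norm z = Zsqrtd.norm (star π) * (K:ℤ) ∧ star π ∣ z} with hB
  have hT : Sset ((p*K : ℕ) : ℤ) = A ∪ B := by
    ext z
    simp only [Sset, Set.mem_setOf_eq, Set.mem_union, hA, hB, hnorm, hsnorm]
    constructor
    · intro hz
      have hdvd : π ∣ z * star z := by
        rw [← norm_cast_eq_mul_conj, hz]
        refine dvd_trans ⟨star π, hppi⟩ ?_
        push_cast
        exact Dvd.intro _ rfl
      rcases hprime.2.2 _ _ hdvd with h' | h'
      · exact Or.inl ⟨by rw [hz]; push_cast; ring, h'⟩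
      · exact Or.inr ⟨by rw [hz]; push_cast; ring, dvd_of_star_dvd h'⟩
    · rintro (⟨hn, -⟩ | ⟨hn, -⟩) <;> (rw [hn]; push_cast; ring)
  have hfinT : (Sset ((p*K : ℕ) : ℤ)).Finite := Sset_finite _
  have hAfin : A.Finite := hfinT.subset (by
    intro z hz; rw [hT]; exact Or.inl hz)
  have hBfin : B.Finite := hfinT.subset (by
    intro z hz; rw [hT]; exact Or.inr hz)
  have hAcard : A.ncard = Rfun K := ncard_dvd_norm π hπne (K:ℤ)
  have hBcard : B.ncard = Rfun K := ncard_dvd_norm (star π) hsne (K:ℤ)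
  have hI : A ∩ B = {z : ℤi | Zsqrtd.norm z = ((p*K : ℕ):ℤ) ∧ ((p:ℕ):ℤi) ∣ z} := by
    ext z
    simp only [Set.mem_inter_iff, Set.mem_setOf_eq, hA, hB, hnorm, hsnorm]
    constructor
    · rintro ⟨⟨hn1, w, rfl⟩, ⟨hn2, hd2⟩⟩
      refine ⟨by rw [hn1]; push_cast; ring, ?_⟩
      have hw : star π ∣ w := by
        rcases hsprime.2.2 _ _ hd2 with h' | h'
        · exact absurd h' hnassoc
        · exact h'
      obtain ⟨v, rfl⟩ := hw
      exact ⟨v, by rw [hppi]; ring⟩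
    · rintro ⟨hn, w, rfl⟩
      rw [hppi] at hn ⊢
      constructor
      · exact ⟨by rw [hn]; push_cast; ring, ⟨star π * w, by ring⟩⟩
      · exact ⟨by rw [hn]; push_cast; ring, ⟨π * w, by ring⟩⟩
  have hmain := Set.ncard_union_add_ncard_inter A B hAfin hBfin
  rw [← hT, hAcard, hBcard] at hmain
  by_cases hpK : p ∣ K
  · obtain ⟨m, rfl⟩ := hpK
    have hm : p * m / p = m := Nat.mul_div_cancel_left m hp.pos
    have hI2 : A ∩ B = {z : ℤi | Zsqrtd.norm z = Zsqrtd.norm ((p:ℕ):ℤi) * ((m:ℕ):ℤ) ∧ ((p:ℕ):ℤi) ∣ z} := by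
      rw [hI]
      ext z
      simp only [Set.mem_setOf_eq, Zsqrtd.norm_natCast]
      constructor
      · rintro ⟨hn, hd⟩; exact ⟨by rw [hn]; push_cast; ring, hd⟩
      · rintro ⟨hn, hd⟩; exact ⟨by rw [hn]; push_cast; ring, hd⟩
    have hpne2 : ((p:ℕ):ℤi) ≠ 0 := by
      rw [hppi]; exact mul_ne_zero hπne hsne
    have hIcard : (A ∩ B).ncard = Rfun m := by
      rw [hI2, ncard_dvd_norm _ hpne2 ((m:ℕ):ℤ)]; rfl
    rw [hIcard] at hmain
    simp only [if_pos (Dvd.intro m rfl), hm]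
    simp only [Rfun] at hmain ⊢
    omega
  · have hIempty : A ∩ B = ∅ := by
      rw [hI]
      ext z
      simp only [Set.mem_setOf_eq, Set.mem_empty_iff_false, iff_false, not_and]
      rintro hn ⟨w, rfl⟩
      rw [Zsqrtd.norm_mul, Zsqrtd.norm_natCast] at hn
      apply hpK
      have : (p:ℤ) ∣ (K:ℤ) := by
        have hpne : (p:ℤ) ≠ 0 := by exact_mod_cast hp.ne_zero
        push_cast at hn
        have h5 : (p:ℤ) * ((p:ℤ) * Zsqrtd.norm w) = (p:ℤ) * (K:ℤ) := by linear_combination hn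
        exact ⟨Zsqrtd.norm w, (mul_left_cancel₀ hpne h5).symm⟩
      exact_mod_cast this
    rw [hIempty, Set.ncard_empty] at hmain
    simp only [if_neg hpK]
    simp only [Rfun] at hmain ⊢
    omega

end P1

section C

lemma chi4_two : chi4 2 = 0 := by decide

lemma cfun_two_pow (e : ℕ) : cfun (2^e) = 1 := by
  rw [cfun_prime_pow Nat.prime_two, chi4_two]
  induction e with
  | zero => simp
  | succ n ih => rw [Finset.sum_range_succ, ih, zero_pow (by omega)]; ring

lemma cfun_p1_pow {p : ℕ} (hp : p.Prime) (h1 : p % 4 = 1) (e : ℕ) :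
    cfun (p^e) = e + 1 := by
  rw [cfun_prime_pow hp]
  have : chi4 p = 1 := by rw [chi4, if_pos h1]
  rw [this]
  simp

lemma cfun_p3_pow {p : ℕ} (hp : p.Prime) (h3 : p % 4 = 3) (e : ℕ) :
    cfun (p^e) = if Even e then 1 else 0 := by
  rw [cfun_prime_pow hp]
  have : chi4 p = -1 := by rw [chi4, if_neg (by omega), if_pos h3]
  rw [this, neg_one_geom_sum]
  by_cases he : Even e
  · simp [Nat.even_add_one, he]
  · simp [Nat.even_add_one, he]

lemma decomp {p : ℕ} (hp : p.Prime) {N : ℕ} (hN : N ≠ 0) :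
    ∃ e M, N = p^e * M ∧ ¬ p ∣ M ∧ M ≠ 0 :=
  ⟨N.factorization p, N / p ^ N.factorization p,
    (Nat.ordProj_mul_ordCompl_eq_self N p).symm,
    Nat.not_dvd_ordCompl hp hN, (Nat.ordCompl_pos p hN).ne'⟩

lemma cfun_pow_mul {p : ℕ} (hp : p.Prime) {M : ℕ} (hM : ¬ p ∣ M) (e : ℕ) :
    cfun (p^e * M) = cfun (p^e) * cfun M :=
  cfun_mul_coprime (Nat.Coprime.pow_left e ((Nat.Prime.coprime_iff_not_dvd hp).2 hM))

lemma cfun_two_mul {M : ℕ} (hM : M ≠ 0) : cfun (2 * M) = cfun M := by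
  obtain ⟨e, M', rfl, hM', hM0⟩ := decomp Nat.prime_two hM
  have h2 : 2 * (2^e * M') = 2^(e+1) * M' := by ring
  rw [h2, cfun_pow_mul Nat.prime_two hM', cfun_pow_mul Nat.prime_two hM',
    cfun_two_pow, cfun_two_pow]

lemma cfun_p3_not_sq {p N : ℕ} (hp : p.Prime) (h3 : p % 4 = 3) (hpN : p ∣ N)
    (hp2N : ¬ p^2 ∣ N) (hN : N ≠ 0) : cfun N = 0 := by
  obtain ⟨e, M, rfl, hM, hM0⟩ := decomp hp hN
  have he1 : e = 1 := by
    rcases Nat.lt_or_ge e 1 with h | h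
    · interval_cases e
      · simp at hpN ⊢
        exact absurd hpN hM
    · rcases Nat.lt_or_ge e 2 with h' | h'
      · omega
      · exfalso
        exact hp2N (dvd_mul_of_dvd_left (pow_dvd_pow p h') M)
  subst he1
  rw [cfun_pow_mul hp hM, cfun_p3_pow hp h3]
  norm_num

lemma cfun_p3_sq_mul {p M : ℕ} (hp : p.Prime) (h3 : p % 4 = 3) (hM : M ≠ 0) :
    cfun (p^2 * M) = cfun M := by
  obtain ⟨e, M', rfl, hM', hM0⟩ := decomp hp hM
  have h2 : p^2 * (p^e * M') = p^(e+2) * M' := by ring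
  rw [h2, cfun_pow_mul hp hM', cfun_pow_mul hp hM',
    cfun_p3_pow hp h3, cfun_p3_pow hp h3]
  have : Even (e+2) ↔ Even e := by simp [Nat.even_add]
  rw [if_congr this rfl rfl]

lemma cfun_p1_rec {p : ℕ} (hp : p.Prime) (h1 : p % 4 = 1) (K : ℕ) (hK : K ≠ 0) :
    cfun (p * K) + (if p ∣ K then cfun (K / p) else 0) = 2 * cfun K := by
  obtain ⟨e, M, rfl, hM, hM0⟩ := decomp hp hK
  have h2 : p * (p^e * M) = p^(e+1) * M := by ring
  rw [h2, cfun_pow_mul hp hM, cfun_pow_mul hp hM, cfun_p1_pow hp h1, cfun_p1_pow hp h1]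
  by_cases hpK : p ∣ p^e * M
  · have he : 1 ≤ e := by
      by_contra h
      have he0 : e = 0 := by omega
      rw [he0] at hpK
      simp at hpK
      exact hM hpK
    have hdiv : p^e * M / p = p^(e-1) * M := by
      have : p^e * M = p * (p^(e-1) * M) := by
        conv_lhs => rw [show e = (e-1)+1 by omega]
        ring
      rw [this, Nat.mul_div_cancel_left _ hp.pos]
    rw [if_pos hpK, hdiv, cfun_pow_mul hp hM, cfun_p1_pow hp h1]
    push_cast [Nat.cast_sub he]
    ring
  · have he0 : e = 0 := by
      by_contra h
      exact hpK (dvd_mul_of_dvd_left (dvd_pow_self p h) M)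
    subst he0
    rw [if_neg hpK]
    push_cast
    ring

theorem Rfun_eq_cfun : ∀ N : ℕ, N ≠ 0 → (Rfun N : ℤ) = 4 * cfun N := by
  intro N
  induction N using Nat.strong_induction_on with
  | _ N ih =>
  intro hN
  rcases eq_or_ne N 1 with rfl | hN1
  · rw [Rfun_one, cfun_one]; norm_num
  · set p := N.minFac with hpdef
    have hp : p.Prime := Nat.minFac_prime hN1
    obtain ⟨K, hK⟩ := N.minFac_dvd
    rw [← hpdef] at hK
    have hK0 : K ≠ 0 := by rintro rfl; rw [mul_zero] at hK; exact hN hK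
    have hKlt : K < N := by
      rw [hK]
      have h2 := hp.two_le
      have h3 := Nat.pos_of_ne_zero hK0
      nlinarith
    rcases hp.eq_two_or_odd' with h2 | hodd
    · rw [hK, h2, Rfun_two_mul, cfun_two_mul hK0]
      exact ih K hKlt hK0
    · have h4 : p % 4 = 1 ∨ p % 4 = 3 := by
        have := Nat.odd_iff.1 hodd
        omega
      rcases h4 with h1 | h3
      · have hR := Rfun_p1 hp h1 K
        have hc := cfun_p1_rec hp h1 K hK0
        by_cases hpK : p ∣ K
        · simp only [if_pos hpK] at hR hc
          have hKp0 : K / p ≠ 0 :=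
            (Nat.div_pos (Nat.le_of_dvd (Nat.pos_of_ne_zero hK0) hpK) hp.pos).ne'
          have e1 := ih K hKlt hK0
          have e2 := ih (K / p) (lt_of_le_of_lt (Nat.div_le_self K p) hKlt) hKp0
          rw [hK]
          have hRz : (Rfun (p*K) : ℤ) + (Rfun (K/p) : ℤ) = 2 * (Rfun K : ℤ) := by
            exact_mod_cast congrArg (fun x : ℕ => (x:ℤ)) hR
          linarith [hRz, e1, e2, hc]
        · simp only [if_neg hpK, add_zero] at hR hc
          have e1 := ih K hKlt hK0
          rw [hK]
          have hRz : (Rfun (p*K) : ℤ) = 2 * (Rfun K : ℤ) := by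
            exact_mod_cast congrArg (fun x : ℕ => (x:ℤ)) hR
          linarith [hRz, e1, hc]
      · by_cases hp2 : p^2 ∣ N
        · obtain ⟨M, hM⟩ := hp2
          have hM0 : M ≠ 0 := by rintro rfl; rw [mul_zero] at hM; exact hN hM
          have hMlt : M < N := by
            rw [hM]
            have h2 := hp.two_le
            have h3 := Nat.pos_of_ne_zero hM0
            nlinarith
          have hdiv : N / p^2 = M := by rw [hM, Nat.mul_div_cancel_left _ (pow_pos hp.pos 2)]
          rw [Rfun_p3 hp h3 ⟨M, hM⟩, hdiv, hM, cfun_p3_sq_mul hp h3 hM0]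
          exact ih M hMlt hM0
        · have hempty := Sset_empty_p3 hp h3 N.minFac_dvd hp2
          rw [cfun_p3_not_sq hp h3 N.minFac_dvd hp2 hN]
          rw [Rfun, hempty, Set.ncard_empty]
          simp

end C

/-- Jacobi theta function θ₂(q) = ∑_{n∈ℤ} q^((n+1/2)²), for 0 < q < 1 (real powers). -/
noncomputable def theta2 (q : ℝ) : ℝ := ∑' n : ℤ, q ^ (((n : ℝ) + 1/2) ^ 2)

/-- Jacobi theta function θ₃(q) = ∑_{n∈ℤ} q^(n²). -/
noncomputable def theta3 (q : ℝ) : ℝ := ∑' n : ℤ, q ^ ((n : ℝ) ^ 2)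

/-- Jacobi theta function θ₄(q) = ∑_{n∈ℤ} (-1)^n q^(n²). -/
noncomputable def theta4 (q : ℝ) : ℝ := ∑' n : ℤ, (-1 : ℝ) ^ n * q ^ ((n : ℝ) ^ 2)

section D

variable {q : ℝ}

def G2 : ℤ × ℤ → ℕ := fun p => p.1.natAbs ^ 2 + p.2.natAbs ^ 2

def G1 : ℕ × ℕ → ℕ := fun p => (p.1 + 1) * (2 * p.2 + 1)

lemma summable_qsq (hq0 : 0 < q) (hq1 : q < 1) : Summable (fun n : ℕ => q ^ (n ^ 2)) := by
  apply Summable.of_nonneg_of_le (fun n => pow_nonneg hq0.le _)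
    (fun n => pow_le_pow_of_le_one hq0.le hq1.le (Nat.le_self_pow two_ne_zero n))
  exact summable_geometric_of_lt_one hq0.le hq1

lemma summable_gz (hq0 : 0 < q) (hq1 : q < 1) :
    Summable (fun n : ℤ => q ^ (n.natAbs ^ 2)) := by
  refine Summable.of_nat_of_neg ?_ ?_ <;>
  · apply (summable_qsq hq0 hq1).congr
    intro n
    simp

lemma theta3_hasSum (hq0 : 0 < q) (hq1 : q < 1) :
    HasSum (fun n : ℤ => q ^ (n.natAbs ^ 2)) (theta3 q) := by
  have hs := summable_gz hq0 hq1
  have heq : theta3 q = ∑' n : ℤ, q ^ (n.natAbs ^ 2) := by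
    rw [theta3]
    apply tsum_congr
    intro n
    rw [← Real.rpow_natCast q (n.natAbs ^ 2)]
    congr 1
    push_cast [Nat.cast_natAbs]
    rw [sq_abs]
  rw [heq]
  exact hs.hasSum

lemma summable_norm_gz (hq0 : 0 < q) (hq1 : q < 1) :
    Summable (fun n : ℤ => ‖q ^ (n.natAbs ^ 2)‖) := by
  have := summable_gz hq0 hq1
  apply this.congr
  intro n
  rw [Real.norm_eq_abs, abs_of_nonneg (pow_nonneg hq0.le _)]

lemma theta3_sq_hasSum (hq0 : 0 < q) (hq1 : q < 1) :
    HasSum (fun p : ℤ × ℤ => q ^ G2 p) (theta3 q ^ 2) := by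
  have hsm : Summable fun z : ℤ × ℤ => q ^ (z.1.natAbs ^ 2) * q ^ (z.2.natAbs ^ 2) :=
    summable_mul_of_summable_norm (f := fun n : ℤ => q ^ (n.natAbs ^ 2))
      (g := fun n : ℤ => q ^ (n.natAbs ^ 2)) (summable_norm_gz hq0 hq1) (summable_norm_gz hq0 hq1)
  have h := (theta3_hasSum hq0 hq1).mul (theta3_hasSum hq0 hq1) hsm
  rw [← sq] at h
  have heq : (fun p : ℤ × ℤ => q ^ G2 p) =
      fun p : ℤ × ℤ => q ^ (p.1.natAbs ^ 2) * q ^ (p.2.natAbs ^ 2) := by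
    funext p
    rw [G2, pow_add]
  rw [heq]
  exact h

def Emap : ℤ × ℤ → GaussianInt := fun p => ⟨p.1, p.2⟩

lemma Emap_inj : Function.Injective Emap := by
  rintro ⟨a, b⟩ ⟨c, d⟩ h
  simp only [Emap, Zsqrtd.ext_iff] at h
  simp [Prod.ext_iff, h.1, h.2]

lemma Emap_image (N : ℕ) : Emap '' (G2 ⁻¹' {N}) = Sset (N : ℤ) := by
  ext z
  constructor
  · rintro ⟨⟨a, b⟩, hp, rfl⟩
    simp only [G2, Set.mem_preimage, Set.mem_singleton_iff] at hp
    show Zsqrtd.norm (Emap (a, b)) = (N : ℤ)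
    rw [Emap, norm_eq_sq_add_sq]
    have h2 := congrArg (Nat.cast : ℕ → ℤ) hp
    push_cast [Int.natCast_natAbs] at h2
    rw [sq_abs, sq_abs] at h2
    simp only
    nlinarith [h2]
  · intro hz
    refine ⟨(z.re, z.im), ?_, by simp [Emap]⟩
    simp only [G2, Set.mem_preimage, Set.mem_singleton_iff]
    have h1 : (N : ℤ) = z.re * z.re + z.im * z.im := by
      rw [← norm_eq_sq_add_sq]; exact hz.symm
    have h2 : ((z.re.natAbs ^ 2 + z.im.natAbs ^ 2 : ℕ) : ℤ) = (N : ℤ) := by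
      push_cast [Int.natCast_natAbs]
      rw [sq_abs, sq_abs]
      nlinarith [h1]
    exact_mod_cast h2

lemma G2_fiber_finite (N : ℕ) : (G2 ⁻¹' {N}).Finite := by
  apply Set.Finite.of_finite_image _ (Emap_inj.injOn)
  rw [Emap_image]
  exact Sset_finite N

lemma G2_fiber_ncard (N : ℕ) : (G2 ⁻¹' {N}).ncard = Rfun N := by
  rw [Rfun, ← Emap_image, Set.ncard_image_of_injective _ Emap_inj]

lemma lhs_hasSum (hq0 : 0 < q) (hq1 : q < 1) :
    HasSum (fun N : ℕ => (Rfun N : ℝ) * q ^ N) (theta3 q ^ 2) := by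
  have h := (theta3_sq_hasSum hq0 hq1).tsum_fiberwise G2
  have key : ∀ N : ℕ, ∑' p : (G2 ⁻¹' {N} : Set (ℤ × ℤ)), q ^ G2 (p : ℤ × ℤ)
      = (Rfun N : ℝ) * q ^ N := by
    intro N
    have h1 : ∀ p : (G2 ⁻¹' {N} : Set (ℤ × ℤ)), q ^ G2 (p : ℤ × ℤ) = q ^ N := by
      rintro ⟨p, hp⟩
      simp only [Set.mem_preimage, Set.mem_singleton_iff] at hp
      rw [hp]
    rw [tsum_congr h1, tsum_const, Nat.card_coe_set_eq, G2_fiber_ncard, nsmul_eq_mul]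
  have heq : (fun N : ℕ => ∑' p : (G2 ⁻¹' {N} : Set (ℤ × ℤ)), q ^ G2 (p : ℤ × ℤ))
      = fun N : ℕ => (Rfun N : ℝ) * q ^ N := funext key
  rwa [heq] at h


lemma chi4_odd (k : ℕ) : chi4 (2 * k + 1) = (-1 : ℤ) ^ k := by
  rcases Nat.even_or_odd k with ⟨j, rfl⟩ | ⟨j, rfl⟩
  · rw [chi4, if_pos (by omega), Even.neg_one_pow ⟨j, rfl⟩]
  · rw [chi4, if_neg (by omega), if_pos (by omega), Odd.neg_one_pow ⟨j, rfl⟩]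

lemma rhs_term_hasSum (hq0 : 0 < q) (hq1 : q < 1) (n : ℕ) :
    HasSum (fun k : ℕ => (-1 : ℝ) ^ k * q ^ ((n+1) * (2*k+1)))
      (q ^ (n+1) / (1 + q ^ (2*(n+1)))) := by
  have hx : ‖-(q ^ (2*(n+1)))‖ < 1 := by
    rw [norm_neg, Real.norm_eq_abs, abs_of_nonneg (pow_nonneg hq0.le _)]
    exact pow_lt_one₀ hq0.le hq1 (by omega)
  have h := (hasSum_geometric_of_norm_lt_one hx).mul_left (q ^ (n+1))
  have hval : q ^ (n+1) * (1 - -(q ^ (2*(n+1))))⁻¹ = q ^ (n+1) / (1 + q ^ (2*(n+1))) := by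
    rw [sub_neg_eq_add, div_eq_mul_inv]
  rw [hval] at h
  have hfun : (fun k : ℕ => q ^ (n+1) * (-(q ^ (2*(n+1))))^k)
      = (fun k : ℕ => (-1:ℝ)^k * q ^ ((n+1)*(2*k+1))) := by
    funext k
    rw [neg_pow, ← pow_mul]
    have he : (n+1) * (2*k+1) = (n+1) + (2*(n+1))*k := by ring
    rw [he, pow_add]
    ring
  rwa [hfun] at h

lemma summable_h (hq0 : 0 < q) (hq1 : q < 1) :
    Summable (fun p : ℕ × ℕ => (-1:ℝ) ^ p.2 * q ^ G1 p) := by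
  apply Summable.of_abs
  have hn1 : Summable (fun n : ℕ => ‖q ^ (n+1)‖) := by
    apply Summable.congr ((summable_geometric_of_lt_one hq0.le hq1).mul_left q)
    intro n
    rw [Real.norm_eq_abs, abs_of_nonneg (pow_nonneg hq0.le _), pow_succ]
    ring
  have hn2 : Summable (fun n : ℕ => ‖q ^ n‖) := by
    apply Summable.congr (summable_geometric_of_lt_one hq0.le hq1)
    intro n
    rw [Real.norm_eq_abs, abs_of_nonneg (pow_nonneg hq0.le _)]
  have hF : Summable (fun p : ℕ × ℕ => q ^ (p.1+1) * q ^ p.2) :=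
    summable_mul_of_summable_norm (f := fun n : ℕ => q ^ (n+1)) (g := fun n : ℕ => q ^ n) hn1 hn2
  apply Summable.of_nonneg_of_le (fun p => abs_nonneg _) _ hF
  intro p
  rw [abs_mul, abs_pow, abs_neg, abs_one, one_pow, one_mul,
    abs_of_nonneg (pow_nonneg hq0.le _), ← pow_add]
  apply pow_le_pow_of_le_one hq0.le hq1.le
  show (p.1+1) + p.2 ≤ (p.1+1)*(2*p.2+1)
  nlinarith

lemma rhs_prod_hasSum (hq0 : 0 < q) (hq1 : q < 1) :
    HasSum (fun p : ℕ × ℕ => (-1:ℝ) ^ p.2 * q ^ G1 p)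
      (∑' n : ℕ, q ^ (n+1) / (1 + q ^ (2*(n+1)))) := by
  have hs := summable_h hq0 hq1
  have h1 := hs.hasSum
  have h2 : ∑' p : ℕ × ℕ, (-1:ℝ)^p.2 * q ^ G1 p
      = ∑' n : ℕ, q ^ (n+1) / (1 + q ^ (2*(n+1))) := by
    rw [Summable.tsum_prod' hs (fun b => (rhs_term_hasSum hq0 hq1 b).summable)]
    apply tsum_congr
    intro n
    simp only [G1]
    exact (rhs_term_hasSum hq0 hq1 n).tsum_eq
  rwa [h2] at h1

lemma G1_fiber_finite (N : ℕ) : (G1 ⁻¹' {N}).Finite := by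
  apply Set.Finite.subset ((Set.finite_Iic N).prod (Set.finite_Iic N))
  rintro ⟨n, k⟩ h
  simp only [G1, Set.mem_preimage, Set.mem_singleton_iff] at h
  constructor
  · show n ≤ N
    nlinarith [h]
  · show k ≤ N
    nlinarith [h]

lemma G1_fiber_zero : (G1 ⁻¹' {0} : Set (ℕ × ℕ)) = ∅ := by
  ext ⟨n, k⟩
  simp only [G1, Set.mem_preimage, Set.mem_singleton_iff, Set.mem_empty_iff_false, iff_false]
  positivity

lemma G1_fiber_sum (N : ℕ) (hN : N ≠ 0) :
    ∑ x ∈ (G1_fiber_finite N).toFinset, (-1:ℤ) ^ x.2 = cfun N := by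
  have hfil : cfun N = ∑ d ∈ N.divisors.filter (fun d => d % 2 = 1), chi4 d := by
    rw [cfun]
    refine (Finset.sum_filter_of_ne ?_).symm
    intro d _ hne
    by_contra h
    apply hne
    rw [chi4, if_neg (by omega), if_neg (by omega)]
  rw [hfil]
  apply Finset.sum_bij' (i := fun (x : ℕ × ℕ) _ => 2 * x.2 + 1)
    (j := fun d _ => (N / d - 1, d / 2))
  · -- hi : maps into filter
    intro x hx
    rw [Set.Finite.mem_toFinset] at hx
    simp only [G1, Set.mem_preimage, Set.mem_singleton_iff] at hx
    rw [Finset.mem_filter, Nat.mem_divisors]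
    exact ⟨⟨⟨x.1 + 1, by rw [← hx]; ring⟩, hN⟩, by omega⟩
  · -- hj : maps back
    intro d hd
    rw [Finset.mem_filter, Nat.mem_divisors] at hd
    obtain ⟨⟨hdvd, -⟩, hodd⟩ := hd
    have hdpos : 0 < d := by
      rcases Nat.eq_zero_or_pos d with rfl | h
      · omega
      · exact h
    have hq : 0 < N / d := Nat.div_pos (Nat.le_of_dvd (Nat.pos_of_ne_zero hN) hdvd) hdpos
    rw [Set.Finite.mem_toFinset]
    simp only [G1, Set.mem_preimage, Set.mem_singleton_iff]
    have h2 : 2 * (d / 2) + 1 = d := by omega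
    have h3 : N / d - 1 + 1 = N / d := by omega
    rw [h2, h3]
    exact Nat.div_mul_cancel hdvd
  · -- left inverse
    intro x hx
    rw [Set.Finite.mem_toFinset] at hx
    simp only [G1, Set.mem_preimage, Set.mem_singleton_iff] at hx
    have h1 : N / (2 * x.2 + 1) = x.1 + 1 := by
      rw [← hx, Nat.mul_div_cancel _ (by omega)]
    ext
    · show N / (2 * x.2 + 1) - 1 = x.1
      omega
    · show (2 * x.2 + 1) / 2 = x.2
      omega
  · -- right inverse
    intro d hd
    rw [Finset.mem_filter, Nat.mem_divisors] at hd
    omega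
  · -- values agree
    intro x hx
    exact (chi4_odd x.2).symm

lemma rhs_hasSum (hq0 : 0 < q) (hq1 : q < 1) :
    HasSum (fun N : ℕ => (if N = 0 then (0:ℝ) else ((cfun N : ℤ) : ℝ) * q ^ N))
      (∑' n : ℕ, q ^ (n+1) / (1 + q ^ (2*(n+1)))) := by
  have h := (rhs_prod_hasSum hq0 hq1).tsum_fiberwise G1
  have key : ∀ N : ℕ, ∑' x : (G1 ⁻¹' {N} : Set (ℕ × ℕ)), (-1:ℝ) ^ (x : ℕ × ℕ).2 * q ^ G1 (x : ℕ × ℕ)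
      = (if N = 0 then (0:ℝ) else ((cfun N : ℤ) : ℝ) * q ^ N) := by
    intro N
    rcases eq_or_ne N 0 with rfl | hN
    · rw [if_pos rfl, G1_fiber_zero]
      exact tsum_empty
    · rw [if_neg hN]
      have hfin := G1_fiber_finite N
      have hco : (↑hfin.toFinset : Set (ℕ × ℕ)) = G1 ⁻¹' {N} := hfin.coe_toFinset
      have hts := Finset.tsum_subtype' hfin.toFinset (fun x : ℕ × ℕ => (-1:ℝ) ^ x.2 * q ^ G1 x)
      rw [← hco, hts]
      have hcongr : ∀ x ∈ hfin.toFinset, (-1:ℝ) ^ x.2 * q ^ G1 x = (-1:ℝ) ^ x.2 * q ^ N := by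
        intro x hx
        rw [Set.Finite.mem_toFinset] at hx
        simp only [Set.mem_preimage, Set.mem_singleton_iff] at hx
        rw [hx]
      rw [Finset.sum_congr rfl hcongr, ← Finset.sum_mul]
      congr 1
      have h2 := G1_fiber_sum N hN
      calc ∑ x ∈ hfin.toFinset, (-1:ℝ) ^ x.2
          = ((∑ x ∈ hfin.toFinset, (-1:ℤ) ^ x.2 : ℤ) : ℝ) := by push_cast; rfl
        _ = ((cfun N : ℤ) : ℝ) := by rw [h2]
  rwa [funext key] at h

lemma Rfun_zero : Rfun 0 = 1 := by
  have h : Sset ((0:ℕ) : ℤ) = {0} := by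
    ext z
    simp only [Sset, Set.mem_setOf_eq, Set.mem_singleton_iff, Nat.cast_zero]
    exact GaussianInt.norm_eq_zero
  rw [Rfun, h, Set.ncard_singleton]

end D

theorem stmt7 (q : ℝ) (hq0 : 0 < q) (hq1 : q < 1) :
    theta3 q ^ 2 = 1 + 4 * ∑' n : ℕ, q ^ (n + 1) / (1 + q ^ (2 * (n + 1))) := by
  have hL := lhs_hasSum hq0 hq1
  have hR := rhs_hasSum hq0 hq1
  have h1 : HasSum (fun N : ℕ => (if N = 0 then (1:ℝ) else 0)) 1 := hasSum_ite_eq 0 1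
  have hsum := h1.add (hR.mul_left 4)
  have hfe : (fun N : ℕ => (Rfun N : ℝ) * q ^ N) =
      (fun N : ℕ => (if N = 0 then (1:ℝ) else 0)
        + 4 * (if N = 0 then (0:ℝ) else ((cfun N : ℤ) : ℝ) * q ^ N)) := by
    funext N
    rcases eq_or_ne N 0 with rfl | hN
    · simp [Rfun_zero]
    · rw [if_neg hN, if_neg hN]
      have h2 : ((Rfun N : ℤ) : ℝ) = ((4 * cfun N : ℤ) : ℝ) := by
        exact_mod_cast congrArg (fun x : ℤ => (x : ℝ)) (Rfun_eq_cfun N hN)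
      push_cast at h2
      rw [h2]
      ring
  rw [hfe] at hL
  exact hL.unique hsum
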